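/- Let λ ∈ X and let v ∈ W be an element of minimal length ℓ(v) such that vλ is dominant. Then v t_λ = t_{vλ} v in W_aff, and ℓ(v t_λ) = ℓ(t_λ) − ℓ(v). -/

import Mathlib

open scoped BigOperators

/-- The multiplicative group structure on `AddAut M` that Mathlib provided in December 2024
(composition as multiplication, `(g * h) x = g (h x)`); Mathlib now makes `AddAut M` an additive
group instead. -/
instance addAutGroupCompat {M : Type*} [Add M] : Group (AddAut M) where
  mul g h := AddEquiv.trans h g
  one := AddEquiv.refl _
  inv := AddEquiv.symm
  mul_assoc _ _ _ := rfl
  one_mul _ := rfl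
  mul_one _ := rfl
  inv_mul_cancel := AddEquiv.self_trans_symm

/-- The data of a finite reduced crystallographic root system `Φ`, with a chosen system of
positive roots `pos` cut out by a homomorphism `f : X → ℝ` not vanishing on any root, inside a
finitely generated free abelian group `X` (the weight lattice).  For each root `α` we record its
coroot `coroot α : X →+ ℤ` and the associated reflection `s α : x ↦ x - ⟨x, α∨⟩ • α`, an
automorphism of `X`.  The reflections preserve `Φ` and the coroots are equivariant for them. -/
structure RootSystemData (X : Type*) [AddCommGroup X] [Module.Free ℤ X] [Module.Finite ℤ X] where
  /-- the (finite) set of roots -/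
  Φ : Finset X
  /-- the set of positive roots -/
  pos : Finset X
  /-- the coroot attached to each root, as a homomorphism `X → ℤ` -/
  coroot : X → (X →+ ℤ)
  /-- the reflection attached to each root -/
  s : X → AddAut X
  /-- a homomorphism `X → ℝ` cutting out the positive roots -/
  f : X →+ ℝ
  f_ne : ∀ α ∈ Φ, f α ≠ 0
  pos_def : ∀ α, α ∈ pos ↔ α ∈ Φ ∧ 0 < f α
  pairing_self : ∀ α ∈ Φ, coroot α α = 2
  s_apply : ∀ α ∈ Φ, ∀ x : X, s α x = x - coroot α x • α
  s_stable : ∀ α ∈ Φ, ∀ β ∈ Φ, s α β ∈ Φ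
  reduced : ∀ α ∈ Φ, ∀ n : ℤ, n • α ∈ Φ → n = 1 ∨ n = -1
  coroot_equivariant : ∀ α ∈ Φ, ∀ β ∈ Φ, ∀ x : X, coroot (s α β) x = coroot β ((s α)⁻¹ x)

namespace RootSystemData

variable {X : Type*} [AddCommGroup X] [Module.Free ℤ X] [Module.Finite ℤ X] [DecidableEq X]
  (R : RootSystemData X)

/-- The Weyl group `W`, the subgroup of `Aut(X)` generated by the reflections `s_α`, `α ∈ Φ`. -/
def W : Subgroup (AddAut X) := Subgroup.closure (R.s '' ↑R.Φ)

/-- A weight `λ` is dominant if `⟨λ, α∨⟩ ≥ 0` for all positive roots `α`. -/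
def IsDominant (lam : X) : Prop := ∀ α ∈ R.pos, 0 ≤ R.coroot α lam

/-- `ℓ(u) = #{α ∈ Φ⁺ : uα ∈ −Φ⁺}` for `u` in the (finite) Weyl group. -/
def lenW (u : AddAut X) : ℕ := (R.pos.filter (fun α => -(u α) ∈ R.pos)).card

/-- The Iwahori–Matsumoto length of the element `u t_λ` of the extended affine Weyl group
`W_aff = W ⋉ X`:
`ℓ(u t_λ) = Σ_{α ∈ Φ⁺ ∩ u⁻¹(Φ⁺)} |⟨λ, α∨⟩| + Σ_{α ∈ Φ⁺ ∩ u⁻¹(−Φ⁺)} |1 + ⟨λ, α∨⟩|`. -/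
def lenAff (u : AddAut X) (lam : X) : ℕ :=
  ∑ α ∈ R.pos.filter (fun α => u α ∈ R.pos), (R.coroot α lam).natAbs
    + ∑ α ∈ R.pos.filter (fun α => -(u α) ∈ R.pos), (1 + R.coroot α lam).natAbs

/-- The length of the translation `t_λ`: `ℓ(t_λ) = Σ_{α ∈ Φ⁺} |⟨λ, α∨⟩|`. -/
def lenT (lam : X) : ℕ := ∑ α ∈ R.pos, (R.coroot α lam).natAbs

end RootSystemData

/-- Multiplication in the extended affine Weyl group `W_aff = W ⋉ X`, where the pair `(u, λ)`
(with `u` an automorphism of `X` lying in `W`) represents the element `u t_λ`: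
`(u t_λ)(v t_μ) = (uv) t_{v⁻¹λ + μ}`, using `t_λ v = v t_{v⁻¹ λ}`
(equivalently `u t_λ u⁻¹ = t_{uλ}`). -/
def waffMul {X : Type*} [AddCommGroup X] (p q : AddAut X × X) : AddAut X × X :=
  (p.1 * q.1, (q.1)⁻¹ p.2 + q.2)


set_option linter.unusedSectionVars false
set_option maxHeartbeats 1000000

namespace RootSystemData
variable {X : Type*} [AddCommGroup X] [Module.Free ℤ X] [Module.Finite ℤ X] [DecidableEq X]
variable (R : RootSystemData X)

lemma pos_sub : R.pos ⊆ R.Φ := fun α h => ((R.pos_def α).1 h).1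

lemma s_invol {α : X} (hα : α ∈ R.Φ) (x : X) : R.s α (R.s α x) = x := by
  rw [R.s_apply α hα x, R.s_apply α hα _, map_sub, map_zsmul, R.pairing_self α hα]
  have h2 : (R.coroot α x • (2:ℤ)) = 2 * R.coroot α x := by simp [smul_eq_mul, mul_comm]
  rw [h2, sub_smul, mul_smul, two_smul]
  abel

lemma s_inv_apply {α : X} (hα : α ∈ R.Φ) (x : X) : (R.s α)⁻¹ x = R.s α x := by
  conv_lhs => rw [← R.s_invol hα x]
  exact (R.s α).symm_apply_apply _

lemma s_self {α : X} (hα : α ∈ R.Φ) : R.s α α = -α := by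
  rw [R.s_apply α hα α, R.pairing_self α hα, two_smul]; abel

lemma neg_mem {α : X} (hα : α ∈ R.Φ) : -α ∈ R.Φ := by
  rw [← R.s_self hα]; exact R.s_stable α hα α hα

lemma coroot_neg {α : X} (hα : α ∈ R.Φ) (x : X) : R.coroot (-α) x = -(R.coroot α x) := by
  rw [← R.s_self hα, R.coroot_equivariant α hα α hα, R.s_inv_apply hα,
    R.s_apply α hα x, map_sub, map_zsmul, R.pairing_self α hα]
  simp [smul_eq_mul]; ring

/-- trichotomy -/
lemma neg_pos_iff {α : X} (hα : α ∈ R.Φ) : -α ∈ R.pos ↔ ¬ (α ∈ R.pos) := by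
  rw [R.pos_def, R.pos_def]
  simp only [map_neg, R.neg_mem hα, true_and, hα]
  rcases (R.f_ne α hα).lt_or_gt with h | h
  · simp [h, h.not_gt, neg_pos]
  · simp [h, h.not_gt, neg_pos, asymm h]


lemma w_image {w : AddAut X} (hw : w ∈ R.W) : R.Φ.image (fun α => w α) = R.Φ := by
  refine Subgroup.closure_induction (p := fun w _ => R.Φ.image (fun α => w α) = R.Φ) ?_ ?_ ?_ ?_ hw
  · rintro x ⟨α, hα, rfl⟩
    apply Finset.eq_of_subset_of_card_le
    · intro β hβ
      simp only [Finset.mem_image] at hβ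
      obtain ⟨γ, hγ, rfl⟩ := hβ
      exact R.s_stable α hα γ hγ
    · rw [Finset.card_image_of_injective _ (R.s α).injective]
  · show R.Φ.image (fun α => α) = R.Φ
    simp
  · intro x y _ _ hx hy
    rw [show (fun α => (x*y) α) = (fun α => x α) ∘ (fun α => y α) from rfl,
      ← Finset.image_image, hy, hx]
  · intro x _ hx
    conv_lhs => rw [← hx]
    rw [Finset.image_image]
    simp [Function.comp_def, show ∀ a, x⁻¹ (x a) = a from x.symm_apply_apply]

lemma w_mem {w : AddAut X} (hw : w ∈ R.W) {α : X} (hα : α ∈ R.Φ) : w α ∈ R.Φ :=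
  R.w_image hw ▸ Finset.mem_image_of_mem _ hα

lemma w_equivariant {w : AddAut X} (hw : w ∈ R.W) :
    ∀ β ∈ R.Φ, ∀ x : X, R.coroot (w β) x = R.coroot β (w⁻¹ x) := by
  refine Subgroup.closure_induction
    (p := fun w hw => ∀ β ∈ R.Φ, ∀ x : X, R.coroot (w β) x = R.coroot β (w⁻¹ x)) ?_ ?_ ?_ ?_ hw
  · rintro x ⟨α, hα, rfl⟩
    exact R.coroot_equivariant α hα
  · exact fun _ _ _ => rfl
  · intro x y hx hy ihx ihy β hβ z
    have hyβ : y β ∈ R.Φ := R.w_mem hy hβ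
    rw [show (x*y) β = x (y β) from rfl, ihx _ hyβ, ihy _ hβ]
    rfl
  · intro x hx ih β hβ z
    have hβ' : x⁻¹ β ∈ R.Φ := R.w_mem (inv_mem hx) hβ
    have := ih _ hβ' (x z)
    rw [show x (x⁻¹ β) = β from x.apply_symm_apply β,
      show x⁻¹ (x z) = z from x.symm_apply_apply z] at this
    rw [inv_inv, ← this]


lemma pos_iff_f {γ : X} (hγ : γ ∈ R.Φ) : γ ∈ R.pos ↔ 0 < R.f γ := by
  rw [R.pos_def]; exact and_iff_right hγ

lemma neg_mem_pos_iff {γ : X} (hγ : γ ∈ R.Φ) : -γ ∈ R.pos ↔ R.f γ < 0 := by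
  rw [R.pos_iff_f (R.neg_mem hγ), map_neg, neg_pos]

/-- `ι` is an involution: `-(σ (-(σ α))) = α`. -/
lemma iota_invol {β : X} (hβ : β ∈ R.Φ) (α : X) : -(R.s β (-(R.s β α))) = α := by
  rw [map_neg, neg_neg, R.s_invol hβ]

lemma alpha_add_iota {β : X} (hβ : β ∈ R.Φ) (α : X) :
    α + -(R.s β α) = R.coroot β α • β := by
  rw [R.s_apply β hβ α]; abel

/-- Key lemma: if `w β` is negative for some positive root `β`, then `ℓ(w s_β) < ℓ(w)`. -/
lemma len_mul_s_lt {w : AddAut X} (hw : w ∈ R.W) {β : X} (hβ : β ∈ R.pos)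
    (hwβ : -(w β) ∈ R.pos) : R.lenW (w * R.s β) < R.lenW w := by
  have hβΦ : β ∈ R.Φ := R.pos_sub hβ
  set σ := R.s β with hσ
  set P := R.pos with hP
  -- basic facts
  have hσΦ : ∀ {γ : X}, γ ∈ R.Φ → σ γ ∈ R.Φ := fun h => R.s_stable β hβΦ _ h
  have hσσ : ∀ γ : X, σ (σ γ) = γ := R.s_invol hβΦ
  set N : Finset X := P.filter (fun α => -(σ α) ∈ P) with hN
  set Iw : Finset X := P.filter (fun α => -(w α) ∈ P) with hIw
  set Iws : Finset X := P.filter (fun α => -(w (σ α)) ∈ P) with hIws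
  have hlenws : R.lenW (w * σ) = Iws.card := rfl
  have hlenw : R.lenW w = Iw.card := rfl
  -- trichotomy helpers
  have tri : ∀ {γ : X}, γ ∈ R.Φ → (¬ (-γ ∈ P) → γ ∈ P) := by
    intro γ hγ h
    rw [R.neg_pos_iff hγ] at h
    exact not_not.1 h
  have tri' : ∀ {γ : X}, γ ∈ R.Φ → γ ∈ P → ¬ (-γ ∈ P) := by
    intro γ hγ h
    rw [R.neg_pos_iff hγ]
    exact not_not.2 h
  -- Step A : card (Iws \ N) = card (Iw \ N)
  have stepA : (Iws \ N).card = (Iw \ N).card := by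
    apply Finset.card_bij (fun α _ => σ α)
    · intro α hα
      simp only [Finset.mem_sdiff, hIws, hIw, hN, Finset.mem_filter] at hα ⊢
      obtain ⟨⟨hαP, hαw⟩, hαN⟩ := hα
      have hαΦ : α ∈ R.Φ := R.pos_sub hαP
      have hσα : ¬ (-(σ α) ∈ P) := fun h => hαN ⟨hαP, h⟩
      have hσαP : σ α ∈ P := tri (hσΦ hαΦ) hσα
      refine ⟨⟨hσαP, hαw⟩, ?_⟩
      rintro ⟨-, h2⟩
      rw [hσσ] at h2
      exact tri' hαΦ hαP h2
    · intro a _ b _ h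
      exact σ.injective h
    · intro γ hγ
      simp only [Finset.mem_sdiff, hIws, hIw, hN, Finset.mem_filter] at hγ
      obtain ⟨⟨hγP, hγw⟩, hγN⟩ := hγ
      have hγΦ : γ ∈ R.Φ := R.pos_sub hγP
      have hσγ : ¬ (-(σ γ) ∈ P) := fun h => hγN ⟨hγP, h⟩
      have hσγP : σ γ ∈ P := tri (hσΦ hγΦ) hσγ
      refine ⟨σ γ, ?_, hσσ γ⟩
      simp only [Finset.mem_sdiff, hIws, hIw, hN, Finset.mem_filter]
      refine ⟨⟨hσγP, by rw [hσσ]; exact hγw⟩, ?_⟩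
      rintro ⟨-, h2⟩
      rw [hσσ] at h2
      exact tri' hγΦ hγP h2
  -- Step B : card (Iws ∩ N) = card (N \ Iw)
  have stepB : (Iws ∩ N).card = (N \ Iw).card := by
    apply Finset.card_bij (fun α _ => -(σ α))
    · intro α hα
      simp only [Finset.mem_inter, Finset.mem_sdiff, hIws, hIw, hN, Finset.mem_filter] at hα ⊢
      obtain ⟨⟨hαP, hαw⟩, -, hαN⟩ := hα
      have hαΦ : α ∈ R.Φ := R.pos_sub hαP
      refine ⟨⟨hαN, by rw [R.iota_invol hβΦ]; exact hαP⟩, ?_⟩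
      rintro ⟨-, h2⟩
      rw [map_neg, neg_neg] at h2
      exact tri' (R.w_mem hw (hσΦ hαΦ)) h2 hαw
    · intro a _ b _ h
      exact σ.injective (neg_injective h)
    · intro γ hγ
      simp only [Finset.mem_inter, Finset.mem_sdiff, hIws, hIw, hN, Finset.mem_filter] at hγ
      obtain ⟨⟨hγP, hγN⟩, hγw⟩ := hγ
      have hγΦ : γ ∈ R.Φ := R.pos_sub hγP
      have hwγ : w γ ∈ R.Φ := R.w_mem hw hγΦ
      have hwγP : w γ ∈ P := tri hwγ (fun h => hγw ⟨hγP, h⟩)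
      refine ⟨-(σ γ), ?_, R.iota_invol hβΦ γ⟩
      simp only [Finset.mem_inter, hIws, hN, Finset.mem_filter]
      have h1 : σ (-(σ γ)) = -γ := by rw [map_neg, hσσ]
      refine ⟨⟨hγN, ?_⟩, hγN, by rw [R.iota_invol hβΦ]; exact hγP⟩
      rw [h1, map_neg, neg_neg]
      exact hwγP
  -- Step C : card (N \ Iw) < card (Iw ∩ N)
  have hβN : β ∈ N := by
    simp only [hN, Finset.mem_filter]
    exact ⟨hβ, by rw [hσ, R.s_self hβΦ, neg_neg]; exact hβ⟩
  have hβIw : β ∈ Iw := by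
    simp only [hIw, Finset.mem_filter]
    exact ⟨hβ, hwβ⟩
  have stepC : (N \ Iw).card < (Iw ∩ N).card := by
    have hinj : (N \ Iw).card ≤ ((Iw ∩ N).erase β).card := by
      apply Finset.card_le_card_of_injOn (fun α => -(σ α))
      · intro α hα
        simp only [Finset.mem_coe, Finset.mem_sdiff, hN, hIw, Finset.mem_filter] at hα
        obtain ⟨⟨hαP, hαN⟩, hαw⟩ := hα
        have hαΦ : α ∈ R.Φ := R.pos_sub hαP
        have hwα : w α ∈ R.Φ := R.w_mem hw hαΦ
        have hwαP : w α ∈ P := tri hwα (fun h => hαw ⟨hαP, h⟩)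
        -- c = coroot β α > 0
        have hc : (0:ℝ) < (R.coroot β α : ℝ) * R.f β := by
          have h1 : R.f (-(σ α)) > 0 := ((R.pos_def _).1 hαN).2
          have h2 : R.f α > 0 := ((R.pos_def _).1 hαP).2
          have h3 : R.f (α + -(σ α)) = (R.coroot β α : ℝ) * R.f β := by
            rw [R.alpha_add_iota hβΦ α, map_zsmul, zsmul_eq_mul]
          rw [map_add] at h3
          nlinarith
        -- f (w β) < 0
        have hfwβ : R.f (w β) < 0 := by
          rw [← R.neg_mem_pos_iff (R.w_mem hw hβΦ)]
          exact hwβ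
        have hcpos : (0:ℤ) < R.coroot β α := by
          have hfβ : 0 < R.f β := ((R.pos_def _).1 hβ).2
          by_contra h
          push_neg at h
          have : (R.coroot β α : ℝ) ≤ 0 := by exact_mod_cast h
          nlinarith
        -- f (w (ι α)) < 0
        have hfwι : R.f (w (-(σ α))) < 0 := by
          have h4 : w α + w (-(σ α)) = R.coroot β α • w β := by
            rw [← map_add, R.alpha_add_iota hβΦ α, map_zsmul]
          have h5 : R.f (w α) + R.f (w (-(σ α))) = (R.coroot β α : ℝ) * R.f (w β) := by
            rw [← map_add, h4, map_zsmul, zsmul_eq_mul]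
          have h6 : 0 < R.f (w α) := ((R.pos_def _).1 hwαP).2
          have h7 : (0:ℝ) < (R.coroot β α : ℝ) := by exact_mod_cast hcpos
          nlinarith
        -- conclude membership
        have hιΦ : -(σ α) ∈ R.Φ := R.neg_mem (hσΦ hαΦ)
        have hιP : -(σ α) ∈ P := hαN
        have hιIw : -(σ α) ∈ Iw := by
          simp only [hIw, Finset.mem_filter]
          refine ⟨hιP, ?_⟩
          rw [R.neg_mem_pos_iff (R.w_mem hw hιΦ)]
          exact hfwι
        have hιN : -(σ α) ∈ N := by
          simp only [hN, Finset.mem_filter]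
          refine ⟨hιP, ?_⟩
          rw [show σ (-(σ α)) = -α by rw [map_neg, hσσ], neg_neg]
          exact hαP
        rw [Finset.mem_coe, Finset.mem_erase, Finset.mem_inter]
        refine ⟨?_, hιIw, hιN⟩
        intro h
        have hσβ : σ β = -β := R.s_self hβΦ
        have hab : α = β := σ.injective (by rw [hσβ, ← h, neg_neg])
        exact hαw (hab ▸ ⟨hβ, hwβ⟩)
      · intro a _ b _ h
        exact σ.injective (neg_injective h)
    calc (N \ Iw).card ≤ ((Iw ∩ N).erase β).card := hinj
      _ < (Iw ∩ N).card := Finset.card_erase_lt_of_mem (Finset.mem_inter.2 ⟨hβIw, hβN⟩)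
  -- assemble
  have e1 : Iws.card = (Iws ∩ N).card + (Iws \ N).card := (Finset.card_inter_add_card_sdiff _ _).symm
  have e2 : Iw.card = (Iw ∩ N).card + (Iw \ N).card := (Finset.card_inter_add_card_sdiff _ _).symm
  rw [hlenws, hlenw, e1, e2, stepA, stepB]
  omega

end RootSystemData

/-- Let `λ ∈ X` and let `v ∈ W` be an element of minimal length `ℓ(v)` such that `vλ` is
dominant.  Then `v t_λ = t_{vλ} v` in `W_aff`, and `ℓ(v t_λ) = ℓ(t_λ) − ℓ(v)`. -/
theorem w_lambda_eq_and_length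
    {X : Type*} [AddCommGroup X] [Module.Free ℤ X] [Module.Finite ℤ X] [DecidableEq X]
    (R : RootSystemData X) (lam : X) (v : AddAut X) (hv : v ∈ R.W)
    (hdom : R.IsDominant (v lam))
    (hmin : ∀ u : AddAut X, u ∈ R.W → R.IsDominant (u lam) → R.lenW v ≤ R.lenW u) :
    waffMul (v, (0 : X)) ((1 : AddAut X), lam) = waffMul ((1 : AddAut X), v lam) (v, (0 : X)) ∧
      (R.lenAff v lam : ℤ) = (R.lenT lam : ℤ) - R.lenW v := by
  constructor
  · simp only [waffMul, mul_one, one_mul, inv_one, Prod.mk.injEq, true_and]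
    have h1 : (1 : AddAut X) (0 : X) = 0 := rfl
    have h2 : v⁻¹ (v lam) = lam := v.symm_apply_apply lam
    rw [h1, h2, zero_add, add_zero]
  · classical
    set A := R.pos.filter (fun α => v α ∈ R.pos) with hA
    set B := R.pos.filter (fun α => -(v α) ∈ R.pos) with hB
    have hBneg : ∀ α ∈ B, R.coroot α lam ≤ -1 := by
      intro α hα
      rw [hB, Finset.mem_filter] at hα
      obtain ⟨hαP, hαv⟩ := hα
      have hαΦ : α ∈ R.Φ := R.pos_sub hαP
      have hvαΦ : v α ∈ R.Φ := R.w_mem hv hαΦ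
      have hle : R.coroot α lam ≤ 0 := by
        have hd := hdom _ hαv
        rw [R.coroot_neg hvαΦ, R.w_equivariant hv α hαΦ,
          show v⁻¹ (v lam) = lam from v.symm_apply_apply lam] at hd
        omega
      have hne : R.coroot α lam ≠ 0 := by
        intro hc
        have hsα : R.s α ∈ R.W := Subgroup.subset_closure ⟨α, hαΦ, rfl⟩
        have hu : v * R.s α ∈ R.W := mul_mem hv hsα
        have hulam : (v * R.s α) lam = v lam := by
          show v (R.s α lam) = v lam
          rw [R.s_apply α hαΦ, hc, zero_smul, sub_zero]
        have hudom : R.IsDominant ((v * R.s α) lam) := by rw [hulam]; exact hdom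
        have h1 := hmin _ hu hudom
        have h2 := R.len_mul_s_lt hv hαP hαv
        omega
      omega
    have hsplit : ∀ g : X → ℤ, ∑ α ∈ R.pos, g α = ∑ α ∈ A, g α + ∑ α ∈ B, g α := by
      intro g
      rw [hA, hB, ← Finset.sum_filter_add_sum_filter_not R.pos (fun α => v α ∈ R.pos) g]
      congr 2
      apply Finset.filter_congr
      intro α hα
      rw [R.neg_pos_iff (R.w_mem hv (R.pos_sub hα))]
    have e3 : ∑ α ∈ B, ((1 + R.coroot α lam).natAbs : ℤ)
        = (∑ α ∈ B, ((R.coroot α lam).natAbs : ℤ)) - B.card := by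
      have hterm : ∀ α ∈ B, ((1 + R.coroot α lam).natAbs : ℤ)
          = ((R.coroot α lam).natAbs : ℤ) - 1 := by
        intro α hα
        have := hBneg α hα
        omega
      rw [Finset.sum_congr rfl hterm, Finset.sum_sub_distrib, Finset.sum_const,
        nsmul_eq_mul, mul_one]
    have hlenAff : (R.lenAff v lam : ℤ)
        = ∑ α ∈ A, ((R.coroot α lam).natAbs : ℤ)
          + ∑ α ∈ B, ((1 + R.coroot α lam).natAbs : ℤ) := by
      rw [RootSystemData.lenAff]
      push_cast
      rfl
    have hlenT : (R.lenT lam : ℤ) = ∑ α ∈ R.pos, ((R.coroot α lam).natAbs : ℤ) := by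
      rw [RootSystemData.lenT]
      push_cast
      rfl
    have hlenW : (R.lenW v : ℤ) = B.card := by rw [RootSystemData.lenW]
    rw [hlenAff, e3, hlenT, hsplit, hlenW]
    ring
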